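/- arXiv:1902.09058 — 3 statements merged into one kernel-verified Lean document; each statement's English description precedes it below -/
import Mathlib

section
/- Every complex root of the polynomial p(t) = t^3 - t^2 - t - 1 other than its unique real root is non-real and has complex absolute value strictly less than 1. -/
lemma root_gt_one {a : ℝ} (h : a ^ 3 - a ^ 2 - a - 1 = 0) : 1 < a := by
  nlinarith [sq_nonneg a, sq_nonneg (a - 1), sq_nonneg (a + 1), sq_nonneg (a * a)]

lemma root_lt_two {a : ℝ} (h : a ^ 3 - a ^ 2 - a - 1 = 0) : a < 2 := by
  nlinarith [sq_nonneg a, sq_nonneg (a - 2), sq_nonneg (a + 1)]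

lemma root_unique {a b : ℝ} (ha : a ^ 3 - a ^ 2 - a - 1 = 0)
    (hb : b ^ 3 - b ^ 2 - b - 1 = 0) : a = b := by
  have h1 := root_gt_one ha
  have h2 := root_gt_one hb
  have key : a ^ 2 + a * b + b ^ 2 - a - b - 1 > 0 := by nlinarith
  have hfac : (a - b) * (a ^ 2 + a * b + b ^ 2 - a - b - 1) = 0 := by
    linear_combination ha - hb
  rcases mul_eq_zero.1 hfac with h | h
  · linarith [sub_eq_zero.1 h]
  · linarith

/-- Every complex root of p(t) = t^3 - t^2 - t - 1 other than its unique real root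
is non-real and has complex absolute value strictly less than 1. -/
theorem three_point_secant_complex_roots :
    (∃! α : ℝ, α ^ 3 - α ^ 2 - α - 1 = 0) ∧
    (∀ α : ℝ, α ^ 3 - α ^ 2 - α - 1 = 0 →
      ∀ z : ℂ, z ^ 3 - z ^ 2 - z - 1 = 0 → z ≠ (α : ℂ) →
        z.im ≠ 0 ∧ ‖z‖ < 1) := by
  constructor
  · -- existence via IVT on [1,2]
    have hc : ContinuousOn (fun x : ℝ => x ^ 3 - x ^ 2 - x - 1) (Set.Icc 1 2) :=
      (by continuity : Continuous fun x : ℝ => x ^ 3 - x ^ 2 - x - 1).continuousOn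
    have hiv := intermediate_value_Icc (by norm_num : (1:ℝ) ≤ 2) hc
    have h0 : (0:ℝ) ∈ Set.Icc ((1:ℝ)^3 - 1^2 - 1 - 1) ((2:ℝ)^3 - 2^2 - 2 - 1) := by
      norm_num
    obtain ⟨α, -, hα⟩ := hiv h0
    exact ⟨α, hα, fun b hb => root_unique hb hα⟩
  · intro α hα z hz hne
    have hα1 := root_gt_one hα
    have hα2 := root_lt_two hα
    have hαc : (α : ℂ) ^ 3 - (α:ℂ) ^ 2 - α - 1 = 0 := by exact_mod_cast congrArg (Complex.ofReal) hα
    have hfac : (z - α) * (z ^ 2 + ((α:ℂ) - 1) * z + ((α:ℂ)^2 - α - 1)) = 0 := by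
      linear_combination hz - hαc
    have hq : z ^ 2 + ((α:ℂ) - 1) * z + ((α:ℂ)^2 - α - 1) = 0 :=
      (mul_eq_zero.1 hfac).resolve_left (sub_ne_zero.2 hne)
    have him : z.im ≠ 0 := by
      intro h0
      have hzre : z = (z.re : ℂ) := by
        apply Complex.ext <;> simp [h0]
      rw [hzre] at hz
      have hre : z.re ^ 3 - z.re ^ 2 - z.re - 1 = 0 := by exact_mod_cast hz
      exact hne (by rw [hzre, root_unique hre hα])
    refine ⟨him, ?_⟩
    set w := (starRingEnd ℂ) z with hw
    have hq' : w ^ 2 + ((α:ℂ) - 1) * w + ((α:ℂ)^2 - α - 1) = 0 := by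
      have := congrArg (starRingEnd ℂ) hq
      simpa [hw, map_add, map_mul, map_pow, map_sub, Complex.conj_ofReal] using this
    have hzw : z ≠ w := by
      intro h
      exact him (by simpa using (Complex.conj_eq_iff_im.1 h.symm))
    have hsumfac : (z - w) * (z + w + ((α:ℂ) - 1)) = 0 := by
      linear_combination hq - hq'
    have hsum : z + w = 1 - α :=
      by have := (mul_eq_zero.1 hsumfac).resolve_left (sub_ne_zero.2 hzw); linear_combination this
    have hprod : z * w = ((α:ℂ)^2 - α - 1) := by
      linear_combination z * hsum - hq
    have hns : Complex.normSq z = α ^ 2 - α - 1 := by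
      have : ((Complex.normSq z : ℝ) : ℂ) = ((α ^ 2 - α - 1 : ℝ) : ℂ) := by
        rw [← Complex.mul_conj]
        push_cast
        linear_combination hprod
      exact_mod_cast this
    have habs : ‖z‖ ^ 2 = α ^ 2 - α - 1 := by
      rw [Complex.sq_norm, hns]
    nlinarith [norm_nonneg z]
end

section
/- The unique real root α of the polynomial p(t) = t^3 - t^2 - t - 1 satisfies (1 + √5)/2 < α < 2; that is, the order of convergence of the three-point Secant method lies strictly between the order of convergence of the Secant method (the golden ratio) and that of Newton's method (which is 2). -/
/-- Any root of the cubic lies in (9/5, 2). -/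
private lemma root_bounds {α : ℝ} (h : α ^ 3 - α ^ 2 - α - 1 = 0) :
    9/5 < α ∧ α < 2 := by
  constructor
  · by_contra hle
    push_neg at hle
    nlinarith [sq_nonneg (α - 1), sq_nonneg (α + 1/3), sq_nonneg α,
      mul_nonneg (sq_nonneg (α + 1/3)) (sub_nonneg.2 hle)]
  · by_contra hle
    push_neg at hle
    nlinarith [sq_nonneg α, sq_nonneg (α - 2)]

/-- The unique real root α of p(t) = t^3 - t^2 - t - 1 satisfies
(1 + √5)/2 < α < 2: the order of convergence of the three-point Secant method
lies strictly between the golden ratio (order of the Secant method) and 2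
(order of Newton's method). -/
theorem three_point_secant_order_between_secant_and_newton :
    (∃! α : ℝ, α ^ 3 - α ^ 2 - α - 1 = 0) ∧
    (∀ α : ℝ, α ^ 3 - α ^ 2 - α - 1 = 0 →
      (1 + Real.sqrt 5) / 2 < α ∧ α < 2) := by
  have hsqrt : Real.sqrt 5 < 13/5 := by
    have := Real.sq_sqrt (by norm_num : (5:ℝ) ≥ 0)
    nlinarith [Real.sqrt_nonneg 5]
  constructor
  · -- existence via IVT
    have hcont : ContinuousOn (fun t : ℝ => t ^ 3 - t ^ 2 - t - 1)
        (Set.Icc (9/5) 2) := by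
      apply Continuous.continuousOn; continuity
    have hmem : (0:ℝ) ∈ Set.Icc ((fun t : ℝ => t ^ 3 - t ^ 2 - t - 1) (9/5))
        ((fun t : ℝ => t ^ 3 - t ^ 2 - t - 1) 2) := by
      constructor <;> norm_num
    have := intermediate_value_Icc (by norm_num : (9/5:ℝ) ≤ 2) hcont hmem
    obtain ⟨α, hαmem, hα⟩ := this
    refine ⟨α, hα, fun β hβ => ?_⟩
    obtain ⟨hα1, hα2⟩ := root_bounds hα
    obtain ⟨hβ1, hβ2⟩ := root_bounds hβ
    have hα' : α ^ 3 - α ^ 2 - α - 1 = 0 := hα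
    have hβ' : β ^ 3 - β ^ 2 - β - 1 = 0 := hβ
    have hfac : (β - α) * (β ^ 2 + β * α + α ^ 2 - β - α - 1) = 0 := by
      linear_combination hβ' - hα'
    have hpos : β ^ 2 + β * α + α ^ 2 - β - α - 1 > 0 := by nlinarith
    have := mul_eq_zero.1 hfac
    rcases this with h | h
    · linarith [sub_eq_zero.1 h]
    · linarith
  · intro α hα
    obtain ⟨h1, h2⟩ := root_bounds hα
    exact ⟨by linarith, h2⟩
end

section
/- Let C > 0 and let (e_k) be a sequence of positive real numbers satisfying e₍k+1₎ = C · e_k · e₍k-1₎ · e₍k-2₎ for all k ≥ 2, and suppose √C · e_i < 1 for i = 0, 1, 2. Then e_k tends to 0, and the ratio log(e₍k+1₎)/log(e_k) converges to the unique real root α of α³ - α² - α - 1 = 0 (α ≈ 1.83929). -/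
open Filter


lemma key_contraction {α a b M : ℝ} (hα : α ^ 3 - α ^ 2 - α - 1 = 0)
    (ha : 167/100 ≤ a) (hb : 167/100 ≤ b)
    (hMa : |a - α| ≤ M) (hMb : |b - α| ≤ M) :
    |(1 + 1/b + 1/(a*b)) - α| ≤ 3/4 * M := by
  have hαl : 9/5 ≤ α := by
    by_contra h
    push_neg at h
    nlinarith [sq_nonneg (α + 1/3), sq_nonneg (α - 9/5), mul_nonneg (sq_nonneg (α + 1/3)) (by linarith : (0:ℝ) ≤ 9/5 - α), sq_nonneg (α - 1)]
  have ha0 : (0:ℝ) < a := by linarith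
  have hb0 : (0:ℝ) < b := by linarith
  have hα0 : (0:ℝ) < α := by linarith
  have hM0 : 0 ≤ M := le_trans (abs_nonneg _) hMa
  have identity : (1 + 1/b + 1/(a*b)) - α = ((α - b)*((a+1)*α) + (α - a)*b) / (a*b*α^2) := by
    field_simp
    linear_combination (-(a*b)) * hα
  rw [identity, abs_div, abs_of_pos (by positivity : (0:ℝ) < a*b*α^2)]
  rw [div_le_iff₀ (by positivity)]
  have hnum : |(α - b)*((a+1)*α) + (α - a)*b| ≤ M*((a+1)*α) + M*b := by
    refine le_trans (abs_add_le _ _) ?_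
    rw [abs_mul, abs_mul, abs_mul, abs_of_pos hα0, abs_of_pos hb0,
      abs_of_pos (show (0:ℝ) < a+1 by linarith)]
    have h1 : |α - b| ≤ M := by rwa [abs_sub_comm]
    have h2 : |α - a| ≤ M := by rwa [abs_sub_comm]
    have t1 := mul_le_mul_of_nonneg_right h1 (by positivity : (0:ℝ) ≤ (a+1)*α)
    have t2 := mul_le_mul_of_nonneg_right h2 hb0.le
    linarith
  refine le_trans hnum ?_
  have core : 4*((a+1)*α + b) ≤ 3*(a*b*α^2) := by
    nlinarith [mul_nonneg (mul_nonneg (by linarith : (0:ℝ) ≤ a - 167/100) (by linarith : (0:ℝ) ≤ b - 167/100)) (by linarith : (0:ℝ) ≤ α - 9/5),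
      mul_nonneg (by linarith : (0:ℝ) ≤ a - 167/100) (by linarith : (0:ℝ) ≤ α - 9/5),
      mul_nonneg (by linarith : (0:ℝ) ≤ b - 167/100) (by linarith : (0:ℝ) ≤ α - 9/5),
      mul_nonneg (by linarith : (0:ℝ) ≤ a - 167/100) (by linarith : (0:ℝ) ≤ b - 167/100),
      sq_nonneg (α - 9/5), mul_nonneg (mul_nonneg (by linarith : (0:ℝ) ≤ a) (by linarith : (0:ℝ) ≤ b)) (sq_nonneg (α - 9/5))]
  nlinarith [mul_le_mul_of_nonneg_left core hM0]


lemma div_div_cancel_aux (A B d : ℝ) (hd : d ≠ 0) : (A/d)/(B/d) = A/B := by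
  rcases eq_or_ne B 0 with hB | hB
  · simp [hB]
  · field_simp

lemma aux_seq (x : ℕ → ℝ) (hpos : ∀ k, 0 < x k)
    (hrec : ∀ k, x (k+3) = x (k+2) + x (k+1) + x k) :
    Tendsto x atTop atTop ∧
    ∀ α : ℝ, α ^ 3 - α ^ 2 - α - 1 = 0 →
      Tendsto (fun k => x (k+1) / x k) atTop (nhds α) := by
  have W1 : ∀ k, x (k+2) < x (k+3) := by
    intro k; have := hpos k; have := hpos (k+1); linarith [hrec k]
  have W2 : ∀ k, x (k+5) < 3 * x (k+4) := by
    intro k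
    have h : x (k+5) = x (k+4) + x (k+3) + x (k+2) := hrec (k+2)
    have h1 : x (k+3) < x (k+4) := W1 (k+1)
    have h2 : x (k+2) < x (k+3) := W1 k
    have hp2 := hpos (k+2)
    have hp3 := hpos (k+3)
    have hp4 := hpos (k+4)
    linarith
  have W3 : ∀ k, (13/9) * x (k+6) < x (k+7) := by
    intro k
    have h : x (k+7) = x (k+6) + x (k+5) + x (k+4) := hrec (k+4)
    have h1 : x (k+6) < 3 * x (k+5) := W2 (k+1)
    have h2 : x (k+5) < 3 * x (k+4) := W2 k
    have hp4 := hpos (k+4)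
    have hp5 := hpos (k+5)
    have hp6 := hpos (k+6)
    linarith
  have W4 : ∀ k, x (k+9) < (367/169) * x (k+8) := by
    intro k
    have h : x (k+9) = x (k+8) + x (k+7) + x (k+6) := hrec (k+6)
    have h1 : (13/9) * x (k+7) < x (k+8) := W3 (k+1)
    have h2 : (13/9) * x (k+6) < x (k+7) := W3 k
    have hp6 := hpos (k+6)
    have hp7 := hpos (k+7)
    have hp8 := hpos (k+8)
    linarith
  have W5 : ∀ k, (167/100) * x (k+10) < x (k+11) := by
    intro k
    have h : x (k+11) = x (k+10) + x (k+9) + x (k+8) := hrec (k+8)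
    have h1 : x (k+10) < (367/169) * x (k+9) := W4 (k+1)
    have h2 : x (k+9) < (367/169) * x (k+8) := W4 k
    have hp8 := hpos (k+8)
    have hp9 := hpos (k+9)
    have hp10 := hpos (k+10)
    linarith
  have hgrow : ∀ k, (167/100:ℝ)^k * x 10 ≤ x (k+10) := by
    intro k
    induction k with
    | zero => simp
    | succ n ih =>
      have h5 := W5 n
      have hp := hpos (n+10)
      calc (167/100:ℝ)^(n+1) * x 10 = (167/100) * ((167/100:ℝ)^n * x 10) := by ring
        _ ≤ (167/100) * x (n+10) := by nlinarith
        _ ≤ x (n+11) := (W5 n).le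
  have hx_top : Tendsto x atTop atTop := by
    have hgeo : Tendsto (fun k : ℕ => (167/100:ℝ)^k * x 10) atTop atTop :=
      (tendsto_pow_atTop_atTop_of_one_lt (by norm_num)).atTop_mul_const (hpos 10)
    have h10 : Tendsto (fun k => x (k+10)) atTop atTop :=
      tendsto_atTop_mono hgrow hgeo
    exact (tendsto_add_atTop_iff_nat 10).1 h10
  refine ⟨hx_top, ?_⟩
  intro α hα
  set r : ℕ → ℝ := fun k => x (k+1) / x k with hrdef
  have hr167 : ∀ k, 167/100 ≤ r (k+10) := by
    intro k
    have := (lt_div_iff₀ (hpos (k+10))).2 (W5 k)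
    exact this.le
  have hrF : ∀ k, r (k+12) = 1 + 1/(r (k+11)) + 1/(r (k+10) * r (k+11)) := by
    intro k
    have hx10 := (hpos (k+10)).ne'
    have hx11 := (hpos (k+11)).ne'
    have hx12 := (hpos (k+12)).ne'
    have e1 : (1:ℝ)/(r (k+11)) = x (k+11) / x (k+12) := by
      rw [show r (k+11) = x (k+12)/x (k+11) from rfl, one_div_div]
    have e2 : (1:ℝ)/(r (k+10) * r (k+11)) = x (k+10)/x (k+12) := by
      rw [show r (k+10) = x (k+11)/x (k+10) from rfl,
        show r (k+11) = x (k+12)/x (k+11) from rfl,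
        div_mul_div_comm, one_div_div, mul_comm (x (k+10)) (x (k+11)),
        mul_div_mul_left _ _ hx11]
    rw [e1, e2, show r (k+12) = x (k+13)/x (k+12) from rfl,
      show x (k+13) = x (k+12) + x (k+11) + x (k+10) from hrec (k+10),
      add_div, add_div, div_self hx12]
  have hcontr : ∀ k, |r (k+12) - α| ≤ 3/4 * max (|r (k+10) - α|) (|r (k+11) - α|) := by
    intro k
    rw [hrF k]
    exact key_contraction hα (hr167 k) (hr167 (k+1)) (le_max_left _ _) (le_max_right _ _)
  set D : ℕ → ℝ := fun m => max (|r (m+10) - α|) (|r (m+11) - α|) with hDdef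
  have hD0 : ∀ m, 0 ≤ D m := fun m => le_trans (abs_nonneg _) (le_max_left _ _)
  have hDsucc : ∀ m, D (m+1) ≤ D m := by
    intro m
    refine max_le (le_max_right _ _) ?_
    have := hcontr m
    have := hD0 m
    calc |r (m+12) - α| ≤ 3/4 * D m := hcontr m
      _ ≤ D m := by linarith
  have hD2 : ∀ m, D (m+2) ≤ 3/4 * D m := by
    intro m
    refine max_le (hcontr m) ?_
    calc |r (m+13) - α| ≤ 3/4 * D (m+1) := hcontr (m+1)
      _ ≤ 3/4 * D m := by linarith [hDsucc m]
  have hanti : Antitone D := antitone_nat_of_succ_le hDsucc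
  have hgeoD : ∀ n, D (2*n) ≤ (3/4:ℝ)^n * D 0 := by
    intro n
    induction n with
    | zero => simp
    | succ n ih =>
      have : 2*(n+1) = 2*n + 2 := by ring
      rw [this]
      calc D (2*n+2) ≤ 3/4 * D (2*n) := hD2 (2*n)
        _ ≤ 3/4 * ((3/4:ℝ)^n * D 0) := by linarith
        _ = (3/4:ℝ)^(n+1) * D 0 := by ring
  have hbound : ∀ m, |r (m+10) - α| ≤ (3/4:ℝ)^(m/2) * D 0 := by
    intro m
    have h2m : 2*(m/2) ≤ m := by omega
    calc |r (m+10) - α| ≤ D m := le_max_left _ _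
      _ ≤ D (2*(m/2)) := hanti h2m
      _ ≤ (3/4:ℝ)^(m/2) * D 0 := hgeoD (m/2)
  have htail : Tendsto (fun m => (3/4:ℝ)^(m/2) * D 0) atTop (nhds 0) := by
    have h1 : Tendsto (fun n : ℕ => (3/4:ℝ)^n) atTop (nhds 0) :=
      tendsto_pow_atTop_nhds_zero_of_lt_one (by norm_num) (by norm_num)
    have h2 : Tendsto (fun m : ℕ => m / 2) atTop atTop :=
      tendsto_atTop_atTop.2 fun b => ⟨2*b, fun n hn => by omega⟩
    have := (h1.comp h2).mul_const (D 0)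
    simpa using this
  have hr10 : Tendsto (fun m => r (m+10)) atTop (nhds α) := by
    rw [tendsto_iff_dist_tendsto_zero]
    simp only [Real.dist_eq]
    exact squeeze_zero (fun m => abs_nonneg _) hbound htail
  exact (tendsto_add_atTop_iff_nat 10).1 hr10

/-- If e₍k+1₎ = C·e_k·e₍k-1₎·e₍k-2₎ with C > 0, all e_k > 0, and √C·e_i < 1 for
i = 0, 1, 2, then e_k → 0 and log(e₍k+1₎)/log(e_k) converges to the unique real
root of α³ - α² - α - 1 = 0. -/
theorem three_point_secant_error_recurrence_order
    (C : ℝ) (hC : 0 < C) (e : ℕ → ℝ) (hpos : ∀ k, 0 < e k)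
    (hrec : ∀ k, e (k + 3) = C * e (k + 2) * e (k + 1) * e k)
    (h0 : Real.sqrt C * e 0 < 1) (h1 : Real.sqrt C * e 1 < 1)
    (h2 : Real.sqrt C * e 2 < 1) :
    Tendsto e atTop (nhds 0) ∧
    ∀ α : ℝ, α ^ 3 - α ^ 2 - α - 1 = 0 →
      Tendsto (fun k => Real.log (e (k + 1)) / Real.log (e k)) atTop (nhds α) := by
  have hs : (0:ℝ) < Real.sqrt C := Real.sqrt_pos.2 hC
  have hse : ∀ k, 0 < Real.sqrt C * e k := fun k => mul_pos hs (hpos k)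
  have hprod : ∀ k, Real.sqrt C * e (k+3)
      = (Real.sqrt C * e (k+2)) * ((Real.sqrt C * e (k+1)) * (Real.sqrt C * e k)) := by
    intro k
    rw [hrec k]
    linear_combination (-(Real.sqrt C * e (k+2) * e (k+1) * e k)) * (Real.mul_self_sqrt hC.le)
  have hlt3 : ∀ k, Real.sqrt C * e k < 1 ∧ Real.sqrt C * e (k+1) < 1 ∧ Real.sqrt C * e (k+2) < 1 := by
    intro k
    induction k with
    | zero => exact ⟨h0, h1, h2⟩
    | succ n ih =>
      refine ⟨ih.2.1, ih.2.2, ?_⟩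
      rw [hprod n]
      have p0 := hse n
      have p1 := hse (n+1)
      have p2 := hse (n+2)
      have hbc : (Real.sqrt C * e (n+1)) * (Real.sqrt C * e n) < 1 := by nlinarith [ih.1, ih.2.1]
      nlinarith [ih.2.2, mul_pos p1 p0]
  have hlt : ∀ k, Real.sqrt C * e k < 1 := fun k => (hlt3 k).1
  set x : ℕ → ℝ := fun k => -Real.log (Real.sqrt C * e k) with hxdef
  have hxpos : ∀ k, 0 < x k := by
    intro k
    have := Real.log_neg (hse k) (hlt k)
    simp only [hxdef]
    linarith
  have hxrec : ∀ k, x (k+3) = x (k+2) + x (k+1) + x k := by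
    intro k
    simp only [hxdef]
    rw [hprod k, Real.log_mul (hse (k+2)).ne' (mul_pos (hse (k+1)) (hse k)).ne',
      Real.log_mul (hse (k+1)).ne' (hse k).ne']
    ring
  obtain ⟨hx_top, hratio⟩ := aux_seq x hxpos hxrec
  have hexp : ∀ k, e k = Real.exp (-(x k)) / Real.sqrt C := by
    intro k
    have hx : -(x k) = Real.log (Real.sqrt C * e k) := by simp [hxdef]
    rw [hx, Real.exp_log (hse k)]
    field_simp
  constructor
  · have hneg : Tendsto (fun k => -(x k)) atTop atBot := tendsto_neg_atBot_iff.2 hx_top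
    have hexp0 : Tendsto (fun k => Real.exp (-(x k))) atTop (nhds 0) :=
      Real.tendsto_exp_atBot.comp hneg
    have := hexp0.div_const (Real.sqrt C)
    rw [zero_div] at this
    exact this.congr fun k => (hexp k).symm
  · intro α hα
    have hr := hratio α hα
    set c : ℝ := Real.log (Real.sqrt C) with hcdef
    have hloge : ∀ k, Real.log (e k) = -(x k) - c := by
      intro k
      have : x k = -(Real.log (Real.sqrt C) + Real.log (e k)) := by
        simp only [hxdef]
        rw [Real.log_mul hs.ne' (hpos k).ne']
      rw [this]
      ring
    have hc0 : Tendsto (fun k => c / x k) atTop (nhds 0) :=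
      Tendsto.div_atTop tendsto_const_nhds hx_top
    have hmain : Tendsto (fun k => (x (k+1)/x k + c/x k) / (1 + c/x k)) atTop (nhds α) := by
      have := Tendsto.div (hr.add hc0) ((tendsto_const_nhds (x := (1:ℝ))).add hc0) (by norm_num)
      rw [add_zero, add_zero, div_one] at this
      exact this
    have heq : ∀ k, (x (k+1)/x k + c/x k) / (1 + c/x k) = Real.log (e (k+1)) / Real.log (e k) := by
      intro k
      have hxk := (hxpos k).ne'
      rw [hloge, hloge]
      rw [show (1:ℝ) + c/x k = (x k + c)/x k by rw [add_div, div_self hxk],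
        show x (k+1)/x k + c/x k = (x (k+1) + c)/x k from (add_div _ _ _).symm,
        div_div_cancel_aux _ _ _ hxk,
        show -(x (k+1)) - c = -(x (k+1) + c) by ring,
        show -(x k) - c = -(x k + c) by ring,
        neg_div_neg_eq]
    exact hmain.congr heq
end
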